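/- Let B' be an irreducible L-structure (L a finite binary relational language) and let B'' be obtained from B' by duplicating a vertex w to a new vertex v' (v' has the same relations to all other vertices as w; w and v' are not adjacent). Then every induced cycle in B'' is isomorphic to an induced cycle already present in B'. -/

import Mathlib

/-- A structure in a relational language with unary symbols `L1` and binary symbols `L2`,
on vertex set `V`. -/
structure Str (L1 L2 V : Type) where
  unary : L1 → V → Prop
  rel : L2 → V → V → Prop

namespace Str

variable {L1 L2 V W : Type}

/-- Two distinct vertices are adjacent if some binary relation holds between them
in either order. -/
def Adj (A : Str L1 L2 V) (x y : V) : Prop :=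
  x ≠ y ∧ ∃ r, A.rel r x y ∨ A.rel r y x

/-- The substructure induced on a set of vertices. -/
def Induced (A : Str L1 L2 V) (S : Set V) : Str L1 L2 S where
  unary r x := A.unary r x.1
  rel r x y := A.rel r x.1 y.1

/-- Homomorphism of structures. -/
def IsHom (A : Str L1 L2 V) (B : Str L1 L2 W) (f : V → W) : Prop :=
  (∀ r x, A.unary r x → B.unary r (f x)) ∧
  (∀ r x y, A.rel r x y → B.rel r (f x) (f y))

/-- Embedding of structures. -/
def IsEmb (A : Str L1 L2 V) (B : Str L1 L2 W) (f : V → W) : Prop :=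
  Function.Injective f ∧
  (∀ r x, A.unary r x ↔ B.unary r (f x)) ∧
  (∀ r x y, A.rel r x y ↔ B.rel r (f x) (f y))

/-- A structure is irreducible if any two distinct vertices are adjacent. -/
def Irred (A : Str L1 L2 V) : Prop :=
  ∀ x y : V, x ≠ y → A.Adj x y

/-- A homomorphism-embedding: a homomorphism whose restriction to every irreducible
substructure is an embedding. -/
def IsHomEmb (A : Str L1 L2 V) (B : Str L1 L2 W) (f : V → W) : Prop :=
  A.IsHom B f ∧
  ∀ S : Set V, (A.Induced S).Irred → (A.Induced S).IsEmb B (fun x => f x.1)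

/-- A (strong) completion of `A` to `K`: an injective homomorphism-embedding into the
irreducible structure `K`. -/
def IsCompletion (A : Str L1 L2 V) (K : Str L1 L2 W) (f : V → W) : Prop :=
  K.Irred ∧ Function.Injective f ∧ A.IsHomEmb K f

/-- A cycle: a cyclic sequence of `ℓ ≥ 3` distinct vertices with consecutive vertices
adjacent. -/
def IsCycle (A : Str L1 L2 V) (ℓ : ℕ) (v : ZMod ℓ → V) : Prop :=
  3 ≤ ℓ ∧ Function.Injective v ∧ ∀ i, A.Adj (v i) (v (i + 1))

/-- An induced cycle: no adjacencies other than the consecutive ones. -/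
def IsInducedCycle (A : Str L1 L2 V) (ℓ : ℕ) (v : ZMod ℓ → V) : Prop :=
  A.IsCycle ℓ v ∧
  ∀ i j, i ≠ j → j ≠ i + 1 → i ≠ j + 1 → ¬ A.Adj (v i) (v j)

/-- Every induced cycle of `A` (seen as a substructure) has a completion to `K`. -/
def CycleCompletes (A : Str L1 L2 V) (K : Str L1 L2 W) : Prop :=
  ∀ (ℓ : ℕ) (v : ZMod ℓ → V), A.IsInducedCycle ℓ v →
    ∃ f : Set.range v → W, (A.Induced (Set.range v)).IsCompletion K f

/-- Every irreducible substructure of `A` of size at most `c` embeds into `K`. -/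
def SmallIrredEmbed (A : Str L1 L2 V) (K : Str L1 L2 W) (c : ℕ) : Prop :=
  ∀ S : Set V, S.Finite → S.ncard ≤ c → (A.Induced S).Irred →
    ∃ f : S → W, (A.Induced S).IsEmb K f

end Str

/-- The hypothesis of Theorem 1: every countable structure `A` has a completion to `K`
provided every induced cycle of `A` completes to `K` and every irreducible substructure
of `A` of size at most 2 embeds into `K`. -/
def CompletionHyp {L1 L2 W : Type} (K : Str L1 L2 W) : Prop :=
  ∀ (V : Type) [Countable V] (A : Str L1 L2 V),
    A.CycleCompletes K → A.SmallIrredEmbed K 2 →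
      ∃ f : V → W, A.IsCompletion K f

/-- The structure obtained from `B'` by duplicating the vertex `w` to a new vertex
(`none`): the new vertex has the same unary relations as `w` and the same relations to
all other vertices, and is not adjacent to `w`. -/
def dup {L1 L2 V : Type} (B' : Str L1 L2 V) (w : V) : Str L1 L2 (Option V) where
  unary r x := B'.unary r (x.getD w)
  rel r x y :=
    match x, y with
    | some a, some b => B'.rel r a b
    | some a, none => a ≠ w ∧ B'.rel r a w
    | none, some b => b ≠ w ∧ B'.rel r w b
    | none, none => B'.rel r w w

/-- Every induced cycle of the vertex-duplication of an irreducible structure `B'` is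
isomorphic to an induced cycle already present in `B'`. -/
theorem dup_induced_cycle {L1 L2 V : Type} [Finite L1] [Finite L2]
    (B' : Str L1 L2 V) (hB : B'.Irred) (w : V)
    (ℓ : ℕ) (v : ZMod ℓ → Option V) (hv : (dup B' w).IsInducedCycle ℓ v) :
    ∃ u : ZMod ℓ → V, B'.IsInducedCycle ℓ u ∧
      (∀ r i, (dup B' w).unary r (v i) ↔ B'.unary r (u i)) ∧
      (∀ r i j, (dup B' w).rel r (v i) (v j) ↔ B'.rel r (u i) (u j)) := by
  obtain ⟨⟨hℓ, hinj, hadj⟩, hind⟩ := hv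
  haveI : NeZero ℓ := ⟨by omega⟩
  -- non-adjacency of `none` and `some w` in `dup`
  have hA : ¬ (dup B' w).Adj none (some w) := by
    rintro ⟨hne, r, h | h⟩ <;> exact h.1 rfl
  have hA' : ¬ (dup B' w).Adj (some w) none := by
    rintro ⟨hne, r, h | h⟩ <;> exact h.1 rfl
  -- adjacency of `none` and `some a` for `a ≠ w`
  have hA2 : ∀ a : V, a ≠ w → (dup B' w).Adj none (some a) := by
    intro a ha
    obtain ⟨_, r, h⟩ := hB w a (Ne.symm ha)
    refine ⟨by simp, r, ?_⟩
    rcases h with h | h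
    · exact Or.inl ⟨ha, h⟩
    · exact Or.inr ⟨ha, h⟩
  -- adjacency of distinct real vertices
  have hA3 : ∀ a b : V, a ≠ b → (dup B' w).Adj (some a) (some b) := by
    intro a b hab
    obtain ⟨_, r, h⟩ := hB a b hab
    exact ⟨by simpa using hab, r, h⟩
  have hdvd : ∀ n : ℕ, 0 < n → ((n : ZMod ℓ) = 0) → ℓ ∣ n := by
    intro n hn h
    rwa [ZMod.natCast_eq_zero_iff] at h
  have h10 : (1 : ZMod ℓ) ≠ 0 := by
    intro h
    have := hdvd 1 (by norm_num) (by exact_mod_cast h)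
    have := Nat.le_of_dvd (by norm_num) this
    omega
  -- `none` and `some w` cannot both appear on the cycle
  have H : ∀ i j, v i = none → v j ≠ some w := by
    intro i j hi hj
    have hij : i ≠ j := by
      intro h; rw [h, hj] at hi; exact Option.some_ne_none w hi
    have hji1 : j ≠ i + 1 := by
      intro h
      have := hadj i
      rw [hi, ← h, hj] at this
      exact hA this
    have hij1 : i ≠ j + 1 := by
      intro h
      have := hadj j
      rw [hj, ← h, hi] at this
      exact hA' this
    have K : ∀ k, k ≠ i → k ≠ i + 1 → i ≠ k + 1 → k = j := by
      intro k hk1 hk2 hk3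
      by_contra hkj
      obtain ⟨a, hva⟩ : ∃ a, v k = some a := by
        cases hvk : v k with
        | none => exact absurd (hinj (hvk.trans hi.symm)) hk1
        | some a => exact ⟨a, rfl⟩
      have haw : a ≠ w := by
        intro h; subst h
        exact hkj (hinj (hva.trans hj.symm))
      apply hind i k (Ne.symm hk1) hk2 hk3
      rw [hi, hva]; exact hA2 a haw
    have e1 : i = j + 1 + 1 := by
      by_cases h : i = j + 1 + 1
      · exact h
      · have := K (j + 1) (Ne.symm hij1)
          (fun he => hij.symm (add_right_cancel he)) h
        exact absurd (add_left_cancel (a := j) (by rw [this, add_zero]) : (1 : ZMod ℓ) = 0) h10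
    -- consider k = j - 1
    rcases em (j - 1 = i) with h1 | h1
    · -- then 3 = 0 in ZMod ℓ, so ℓ = 3
      have h3 : ((3 : ℕ) : ZMod ℓ) = 0 := by
        push_cast
        linear_combination -h1 - e1
      have hl3 : ℓ = 3 := by
        have := Nat.le_of_dvd (by norm_num) (hdvd 3 (by norm_num) h3)
        omega
      subst hl3
      have harith : ∀ i j : ZMod 3, i = j + 1 + 1 → j = i + 1 := by decide
      exact hji1 (harith i j e1)
    rcases em (j - 1 = i + 1) with h2 | h2
    · -- then ℓ = 4
      have hji2 : j = i + 1 + 1 := by linear_combination h2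
      have h4 : ((4 : ℕ) : ZMod ℓ) = 0 := by
        push_cast
        linear_combination -e1 - hji2
      have hdd := hdvd 4 (by norm_num) h4
      have hle := Nat.le_of_dvd (by norm_num) hdd
      have hl4 : ℓ = 4 := by
        rcases (by omega : ℓ = 3 ∨ ℓ = 4) with h | h
        · subst h; norm_num at hdd
        · exact h
      subst hl4
      have d1 : ∀ i : ZMod 4, ¬ i + 1 = i := by decide
      have d3 : ∀ i : ZMod 4, ¬ i + 1 + 1 + 1 = i := by decide
      have d13 : ∀ i : ZMod 4, i + 1 ≠ i + 1 + 1 + 1 := by decide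
      have d32 : ∀ i : ZMod 4, i + 1 + 1 + 1 ≠ i + 1 + 1 := by decide
      have d14 : ∀ i : ZMod 4, i + 1 ≠ i + 1 + 1 + 1 + 1 := by decide
      -- the two remaining vertices are distinct real vertices ≠ w, adjacent but
      -- non-consecutive: contradiction with inducedness
      obtain ⟨a, hva⟩ : ∃ a, v (i + 1) = some a := by
        cases hvk : v (i + 1) with
        | none => exact absurd (hinj (hvk.trans hi.symm)) (d1 i)
        | some a => exact ⟨a, rfl⟩
      obtain ⟨b, hvb⟩ : ∃ b, v (i + 1 + 1 + 1) = some b := by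
        cases hvk : v (i + 1 + 1 + 1) with
        | none => exact absurd (hinj (hvk.trans hi.symm)) (d3 i)
        | some b => exact ⟨b, rfl⟩
      have hab : a ≠ b := by
        intro h; subst h
        exact absurd (hinj (hva.trans hvb.symm)) (d13 i)
      apply hind (i + 1) (i + 1 + 1 + 1) (d13 i) (d32 i) (d14 i)
      rw [hva, hvb]
      exact hA3 a b hab
    · have := K (j - 1) (Ne.symm (fun h => h1 h.symm) : j - 1 ≠ i)
        h2 (fun h => hij (by linear_combination h))
      exact h10 (by linear_combination -this)
  -- now define u := getD w
  have hrel : ∀ r i j, (dup B' w).rel r (v i) (v j) ↔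
      B'.rel r ((v i).getD w) ((v j).getD w) := by
    intro r i j
    cases hvi : v i with
    | none =>
      cases hvj : v j with
      | none => exact Iff.rfl
      | some b =>
        have hbw : b ≠ w := fun h => H i j hvi (by rw [hvj, h])
        exact ⟨fun h => h.2, fun h => ⟨hbw, h⟩⟩
    | some a =>
      cases hvj : v j with
      | none =>
        have haw : a ≠ w := fun h => H j i hvj (by rw [hvi, h])
        exact ⟨fun h => h.2, fun h => ⟨haw, h⟩⟩
      | some b => exact Iff.rfl
  have hinjU : Function.Injective (fun i => (v i).getD w) := by
    intro i j h
    simp only at h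
    apply hinj
    cases hvi : v i with
    | none =>
      cases hvj : v j with
      | none => rfl
      | some b =>
        rw [hvi, hvj] at h
        simp only [Option.getD_none, Option.getD_some] at h
        exact absurd (hvj.trans (congrArg some h.symm)) (H i j hvi)
    | some a =>
      cases hvj : v j with
      | none =>
        rw [hvi, hvj] at h
        simp only [Option.getD_none, Option.getD_some] at h
        exact absurd (hvi.trans (congrArg some h)) (H j i hvj)
      | some b =>
        rw [hvi, hvj] at h
        simp only [Option.getD_some] at h
        rw [h]
  have hAdj : ∀ i j, (dup B' w).Adj (v i) (v j) ↔
      B'.Adj ((v i).getD w) ((v j).getD w) := by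
    intro i j
    constructor
    · rintro ⟨hne, r, h | h⟩
      · exact ⟨fun he => hne (by rw [hinjU he]), r, Or.inl ((hrel r i j).mp h)⟩
      · exact ⟨fun he => hne (by rw [hinjU he]), r, Or.inr ((hrel r j i).mp h)⟩
    · rintro ⟨hne, r, h | h⟩
      · exact ⟨fun he => hne (by rw [he]), r, Or.inl ((hrel r i j).mpr h)⟩
      · exact ⟨fun he => hne (by rw [he]), r, Or.inr ((hrel r j i).mpr h)⟩
  refine ⟨fun i => (v i).getD w,
    ⟨⟨hℓ, hinjU, fun i => (hAdj i (i + 1)).mp (hadj i)⟩,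
      fun i j h1 h2 h3 hadj' => hind i j h1 h2 h3 ((hAdj i j).mpr hadj')⟩,
    fun r i => Iff.rfl, hrel⟩
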